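/- The regulated Petri net A ⊙ N is weakly reversible if and only if N is weakly reversible. -/
import Mathlib


/-- Input bag of a transition. -/
def preBag {P T : Type*} (Wm : P → T → ℕ) (t : T) : P → ℕ := fun p => Wm p t

/-- Output bag of a transition. -/
def postBag {P T : Type*} (Wp : P → T → ℕ) (t : T) : P → ℕ := fun p => Wp p t

/-- The finite set of complexes of the net. -/
def complexes {P T : Type*} [Fintype P] [Fintype T] [DecidableEq P]
    (Wm Wp : P → T → ℕ) : Finset (P → ℕ) :=
  (Finset.univ.image (preBag Wm)) ∪ (Finset.univ.image (postBag Wp))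

variable {P T : Type*} [Fintype P] [Fintype T] [DecidableEq P] [DecidableEq T]

/-- Pre-matrix of the regulated net `A ⊙ N`: the places of `N` together with
one new place per complex of `N` (the reaction Petri net is stacked on `N`). -/
def rWm (Wm Wp : P → T → ℕ) : (P ⊕ {c // c ∈ complexes Wm Wp}) → T → ℕ
  | Sum.inl p, t => Wm p t
  | Sum.inr c, t => if c.1 = preBag Wm t then 1 else 0

/-- Post-matrix of the regulated net `A ⊙ N`. -/
def rWp (Wm Wp : P → T → ℕ) : (P ⊕ {c // c ∈ complexes Wm Wp}) → T → ℕ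
  | Sum.inl p, t => Wp p t
  | Sum.inr c, t => if c.1 = postBag Wp t then 1 else 0

/-- `c` is a complex of the net. -/
def isComplex {P' T' : Type*} (Wm Wp : P' → T' → ℕ) (c : P' → ℕ) : Prop :=
  (∃ t, c = preBag Wm t) ∨ (∃ t, c = postBag Wp t)

/-- Arc of the reaction graph. -/
def rarc {P' T' : Type*} (Wm Wp : P' → T' → ℕ) (c c' : P' → ℕ) : Prop :=
  ∃ t, c = preBag Wm t ∧ c' = postBag Wp t

/-- Weak reversibility: every connected component of the reaction graph is
strongly connected. -/
def weaklyReversible {P' T' : Type*} (Wm Wp : P' → T' → ℕ) : Prop :=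
  ∀ c c', isComplex Wm Wp c → isComplex Wm Wp c' →
    Relation.ReflTransGen (fun a b => rarc Wm Wp a b ∨ rarc Wm Wp b a) c c' →
    Relation.ReflTransGen (rarc Wm Wp) c c'

section AuxLift
variable (Wm Wp : P → T → ℕ)

/-- Lift a complex of `N` to a marking of `A ⊙ N`. -/
def liftC (c : P → ℕ) : (P ⊕ {c // c ∈ complexes Wm Wp}) → ℕ :=
  Sum.elim c (fun cc => if cc.1 = c then 1 else 0)

lemma liftC_inj {c c' : P → ℕ} (h : liftC Wm Wp c = liftC Wm Wp c') : c = c' :=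
  funext fun p => congrFun h (Sum.inl p)

lemma pre_lift (t : T) : preBag (rWm Wm Wp) t = liftC Wm Wp (preBag Wm t) := by
  funext x; cases x <;> rfl

lemma post_lift (t : T) : postBag (rWp Wm Wp) t = liftC Wm Wp (postBag Wp t) := by
  funext x; cases x <;> rfl

lemma rarc_lift {c c' : P → ℕ} (h : rarc Wm Wp c c') :
    rarc (rWm Wm Wp) (rWp Wm Wp) (liftC Wm Wp c) (liftC Wm Wp c') := by
  obtain ⟨t, h1, h2⟩ := h
  exact ⟨t, by rw [pre_lift, h1], by rw [post_lift, h2]⟩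

lemma rarc_unlift {a b : (P ⊕ {c // c ∈ complexes Wm Wp}) → ℕ}
    (h : rarc (rWm Wm Wp) (rWp Wm Wp) a b) :
    ∃ u v, a = liftC Wm Wp u ∧ b = liftC Wm Wp v ∧ rarc Wm Wp u v := by
  obtain ⟨t, h1, h2⟩ := h
  exact ⟨preBag Wm t, postBag Wp t, by rw [h1, pre_lift], by rw [h2, post_lift],
    t, rfl, rfl⟩

lemma isComplex_unlift {a : (P ⊕ {c // c ∈ complexes Wm Wp}) → ℕ}
    (h : isComplex (rWm Wm Wp) (rWp Wm Wp) a) :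
    ∃ c, a = liftC Wm Wp c ∧ isComplex Wm Wp c := by
  rcases h with ⟨t, ht⟩ | ⟨t, ht⟩
  · exact ⟨preBag Wm t, by rw [ht, pre_lift], Or.inl ⟨t, rfl⟩⟩
  · exact ⟨postBag Wp t, by rw [ht, post_lift], Or.inr ⟨t, rfl⟩⟩

lemma isComplex_lift {c : P → ℕ} (h : isComplex Wm Wp c) :
    isComplex (rWm Wm Wp) (rWp Wm Wp) (liftC Wm Wp c) := by
  rcases h with ⟨t, ht⟩ | ⟨t, ht⟩
  · exact Or.inl ⟨t, by rw [ht, pre_lift]⟩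
  · exact Or.inr ⟨t, by rw [ht, post_lift]⟩

lemma pull_dir {c : P → ℕ} {b : (P ⊕ {c // c ∈ complexes Wm Wp}) → ℕ}
    (h : Relation.ReflTransGen (rarc (rWm Wm Wp) (rWp Wm Wp)) (liftC Wm Wp c) b) :
    ∀ c', b = liftC Wm Wp c' → Relation.ReflTransGen (rarc Wm Wp) c c' := by
  induction h with
  | refl => intro c' hc'; rw [liftC_inj Wm Wp hc'.symm]
  | tail _ hstep ih =>
      intro c' hc'
      obtain ⟨u, v, hu, hv, huv⟩ := rarc_unlift Wm Wp hstep
      rw [hc'] at hv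
      rw [liftC_inj Wm Wp hv]
      exact (ih u hu).tail huv

lemma pull_sym {c : P → ℕ} {b : (P ⊕ {c // c ∈ complexes Wm Wp}) → ℕ}
    (h : Relation.ReflTransGen
      (fun a b => rarc (rWm Wm Wp) (rWp Wm Wp) a b ∨ rarc (rWm Wm Wp) (rWp Wm Wp) b a)
      (liftC Wm Wp c) b) :
    ∀ c', b = liftC Wm Wp c' →
      Relation.ReflTransGen (fun a b => rarc Wm Wp a b ∨ rarc Wm Wp b a) c c' := by
  induction h with
  | refl => intro c' hc'; rw [liftC_inj Wm Wp hc'.symm]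
  | tail _ hstep ih =>
      intro c' hc'
      rcases hstep with hstep | hstep
      · obtain ⟨u, v, hu, hv, huv⟩ := rarc_unlift Wm Wp hstep
        rw [hc'] at hv
        rw [liftC_inj Wm Wp hv]
        exact (ih u hu).tail (Or.inl huv)
      · obtain ⟨u, v, hu, hv, huv⟩ := rarc_unlift Wm Wp hstep
        rw [hc'] at hu
        rw [liftC_inj Wm Wp hu]
        exact (ih v hv).tail (Or.inr huv)

lemma push_dir {c c' : P → ℕ} (h : Relation.ReflTransGen (rarc Wm Wp) c c') :
    Relation.ReflTransGen (rarc (rWm Wm Wp) (rWp Wm Wp))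
      (liftC Wm Wp c) (liftC Wm Wp c') := by
  induction h with
  | refl => exact .refl
  | tail _ hstep ih => exact ih.tail (rarc_lift Wm Wp hstep)

lemma push_sym {c c' : P → ℕ}
    (h : Relation.ReflTransGen (fun a b => rarc Wm Wp a b ∨ rarc Wm Wp b a) c c') :
    Relation.ReflTransGen
      (fun a b => rarc (rWm Wm Wp) (rWp Wm Wp) a b ∨ rarc (rWm Wm Wp) (rWp Wm Wp) b a)
      (liftC Wm Wp c) (liftC Wm Wp c') := by
  induction h with
  | refl => exact .refl
  | tail _ hstep ih =>
      rcases hstep with hstep | hstep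
      · exact ih.tail (Or.inl (rarc_lift Wm Wp hstep))
      · exact ih.tail (Or.inr (rarc_lift Wm Wp hstep))

end AuxLift

/-- The regulated Petri net `A ⊙ N` is weakly reversible iff `N` is. -/
theorem stmt10 (Wm Wp : P → T → ℕ) :
    weaklyReversible (rWm Wm Wp) (rWp Wm Wp) ↔ weaklyReversible Wm Wp := by
  constructor
  · intro hR c c' hc hc' hpath
    have := hR _ _ (isComplex_lift Wm Wp hc) (isComplex_lift Wm Wp hc')
      (push_sym Wm Wp hpath)
    exact pull_dir Wm Wp this c' rfl
  · intro hN a a' ha ha' hpath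
    obtain ⟨c, rfl, hc⟩ := isComplex_unlift Wm Wp ha
    obtain ⟨c', rfl, hc'⟩ := isComplex_unlift Wm Wp ha'
    exact push_dir Wm Wp (hN c c' hc hc' (pull_sym Wm Wp hpath c' rfl))
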